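/- Let (φ, ω) be a twisted partial action of a Hopf algebra H on an algebra A satisfying the partial cocycle condition and the unit conditions ω(h ⊗ 1_H) = ω(1_H ⊗ h) = φ(h ⊗ 1_A). Then the product on A ⊗ H given by (a ⊗ h)(b ⊗ g) = Σ a φ(h₍₁₎ ⊗ b) ω(h₍₂₎ ⊗ g₍₁₎) ⊗ h₍₃₎ g₍₂₎ is associative. -/

import Mathlib

open TensorProduct

open TensorProduct

variable {R A V H : Type*} [CommRing R] [Ring A] [Algebra R A]
  [AddCommGroup V] [Module R V] [Ring H] [HopfAlgebra R H]

/-- (μ_A ⊗ V) ∘ (A ⊗ ψ) ∘ (ψ ⊗ A) : (V ⊗ A) ⊗ A → A ⊗ V -/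
noncomputable def psiMulLHS (ψ : V ⊗[R] A →ₗ[R] A ⊗[R] V) :
    (V ⊗[R] A) ⊗[R] A →ₗ[R] A ⊗[R] V :=
  TensorProduct.map (LinearMap.mul' R A) LinearMap.id
    ∘ₗ (TensorProduct.assoc R A A V).symm.toLinearMap
    ∘ₗ LinearMap.lTensor A ψ
    ∘ₗ (TensorProduct.assoc R A V A).toLinearMap
    ∘ₗ LinearMap.rTensor A ψ

/-- ψ ∘ (V ⊗ μ_A) : (V ⊗ A) ⊗ A → A ⊗ V -/
noncomputable def psiMulRHS (ψ : V ⊗[R] A →ₗ[R] A ⊗[R] V) :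
    (V ⊗[R] A) ⊗[R] A →ₗ[R] A ⊗[R] V :=
  ψ ∘ₗ LinearMap.lTensor V (LinearMap.mul' R A)
    ∘ₗ (TensorProduct.assoc R V A A).toLinearMap

/-- ∇ = (μ_A ⊗ V) ∘ (A ⊗ ψ) ∘ (A ⊗ V ⊗ η_A) : A ⊗ V → A ⊗ V -/
noncomputable def nabla (ψ : V ⊗[R] A →ₗ[R] A ⊗[R] V) :
    A ⊗[R] V →ₗ[R] A ⊗[R] V :=
  TensorProduct.map (LinearMap.mul' R A) LinearMap.id
    ∘ₗ (TensorProduct.assoc R A A V).symm.toLinearMap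
    ∘ₗ LinearMap.lTensor A ψ
    ∘ₗ LinearMap.lTensor A ((TensorProduct.mk R V A).flip 1)

/-- ψ(h ⊗ a) = Σ φ(h₍₁₎ ⊗ a) ⊗ h₍₂₎. -/
noncomputable def psiOf (φ : H ⊗[R] A →ₗ[R] A) : H ⊗[R] A →ₗ[R] A ⊗[R] H :=
  LinearMap.rTensor H φ
    ∘ₗ (TensorProduct.assoc R H A H).symm.toLinearMap
    ∘ₗ LinearMap.lTensor H (TensorProduct.comm R H A).toLinearMap
    ∘ₗ (TensorProduct.assoc R H H A).toLinearMap
    ∘ₗ LinearMap.rTensor A (Coalgebra.comul : H →ₗ[R] H ⊗[R] H)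

/-- σ(h ⊗ g) = Σ ω(h₍₁₎ ⊗ g₍₁₎) ⊗ h₍₂₎g₍₂₎. -/
noncomputable def sigmaOf (ω : H ⊗[R] H →ₗ[R] A) : H ⊗[R] H →ₗ[R] A ⊗[R] H :=
  TensorProduct.map ω (LinearMap.mul' R H)
    ∘ₗ (TensorProduct.tensorTensorTensorComm R H H H H).toLinearMap
    ∘ₗ TensorProduct.map (Coalgebra.comul : H →ₗ[R] H ⊗[R] H)
        (Coalgebra.comul : H →ₗ[R] H ⊗[R] H)

/-- Condition (ii) of a twisted partial action:
φ(h ⊗ ab) = Σ φ(h₍₁₎ ⊗ a) φ(h₍₂₎ ⊗ b), as maps H ⊗ (A ⊗ A) → A. -/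
def IsPartiallyMultiplicative (φ : H ⊗[R] A →ₗ[R] A) : Prop :=
  φ ∘ₗ LinearMap.lTensor H (LinearMap.mul' R A) =
    LinearMap.mul' R A ∘ₗ TensorProduct.map φ φ
      ∘ₗ (TensorProduct.tensorTensorTensorComm R H H A A).toLinearMap
      ∘ₗ LinearMap.rTensor (A ⊗[R] A) (Coalgebra.comul : H →ₗ[R] H ⊗[R] H)

/-- Twisted condition LHS: (μ_A ⊗ V) ∘ (A ⊗ ψ) ∘ (σ ⊗ A) : (V ⊗ V) ⊗ A → A ⊗ V. -/
noncomputable def twistedLHS (ψ : V ⊗[R] A →ₗ[R] A ⊗[R] V)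
    (σ : V ⊗[R] V →ₗ[R] A ⊗[R] V) : (V ⊗[R] V) ⊗[R] A →ₗ[R] A ⊗[R] V :=
  TensorProduct.map (LinearMap.mul' R A) LinearMap.id
    ∘ₗ (TensorProduct.assoc R A A V).symm.toLinearMap
    ∘ₗ LinearMap.lTensor A ψ
    ∘ₗ (TensorProduct.assoc R A V A).toLinearMap
    ∘ₗ LinearMap.rTensor A σ

/-- Twisted condition RHS: (μ_A ⊗ V) ∘ (A ⊗ σ) ∘ (ψ ⊗ V) ∘ (V ⊗ ψ) : V ⊗ (V ⊗ A) → A ⊗ V. -/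
noncomputable def twistedRHS (ψ : V ⊗[R] A →ₗ[R] A ⊗[R] V)
    (σ : V ⊗[R] V →ₗ[R] A ⊗[R] V) : V ⊗[R] (V ⊗[R] A) →ₗ[R] A ⊗[R] V :=
  TensorProduct.map (LinearMap.mul' R A) LinearMap.id
    ∘ₗ (TensorProduct.assoc R A A V).symm.toLinearMap
    ∘ₗ LinearMap.lTensor A σ
    ∘ₗ (TensorProduct.assoc R A V V).toLinearMap
    ∘ₗ LinearMap.rTensor V ψ
    ∘ₗ (TensorProduct.assoc R V A V).symm.toLinearMap
    ∘ₗ LinearMap.lTensor V ψ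

/-- Cocycle condition LHS: (μ_A ⊗ V) ∘ (A ⊗ σ) ∘ (σ ⊗ V) : (V ⊗ V) ⊗ V → A ⊗ V. -/
noncomputable def cocycleLHS (σ : V ⊗[R] V →ₗ[R] A ⊗[R] V) :
    (V ⊗[R] V) ⊗[R] V →ₗ[R] A ⊗[R] V :=
  TensorProduct.map (LinearMap.mul' R A) LinearMap.id
    ∘ₗ (TensorProduct.assoc R A A V).symm.toLinearMap
    ∘ₗ LinearMap.lTensor A σ
    ∘ₗ (TensorProduct.assoc R A V V).toLinearMap
    ∘ₗ LinearMap.rTensor V σ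

/-- Cocycle condition RHS: (μ_A ⊗ V) ∘ (A ⊗ σ) ∘ (ψ ⊗ V) ∘ (V ⊗ σ) : V ⊗ (V ⊗ V) → A ⊗ V. -/
noncomputable def cocycleRHS (ψ : V ⊗[R] A →ₗ[R] A ⊗[R] V)
    (σ : V ⊗[R] V →ₗ[R] A ⊗[R] V) : V ⊗[R] (V ⊗[R] V) →ₗ[R] A ⊗[R] V :=
  TensorProduct.map (LinearMap.mul' R A) LinearMap.id
    ∘ₗ (TensorProduct.assoc R A A V).symm.toLinearMap
    ∘ₗ LinearMap.lTensor A σ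
    ∘ₗ (TensorProduct.assoc R A V V).toLinearMap
    ∘ₗ LinearMap.rTensor V ψ
    ∘ₗ (TensorProduct.assoc R V A V).symm.toLinearMap
    ∘ₗ LinearMap.lTensor V σ

/-- Auxiliary map V ⊗ (A ⊗ V) → A ⊗ V used in the weak crossed product. -/
noncomputable def wcpAux (ψ : V ⊗[R] A →ₗ[R] A ⊗[R] V)
    (σ : V ⊗[R] V →ₗ[R] A ⊗[R] V) : V ⊗[R] (A ⊗[R] V) →ₗ[R] A ⊗[R] V :=
  TensorProduct.map (LinearMap.mul' R A) LinearMap.id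
    ∘ₗ (TensorProduct.assoc R A A V).symm.toLinearMap
    ∘ₗ LinearMap.lTensor A σ
    ∘ₗ (TensorProduct.assoc R A V V).toLinearMap
    ∘ₗ LinearMap.rTensor V ψ
    ∘ₗ (TensorProduct.assoc R V A V).symm.toLinearMap

/-- The weak crossed product multiplication
μ_{A⊗V} = (μ_A ⊗ V) ∘ (μ_A ⊗ σ) ∘ (A ⊗ ψ ⊗ V) on A ⊗ V. -/
noncomputable def wcpMul (ψ : V ⊗[R] A →ₗ[R] A ⊗[R] V)
    (σ : V ⊗[R] V →ₗ[R] A ⊗[R] V) :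
    (A ⊗[R] V) ⊗[R] (A ⊗[R] V) →ₗ[R] A ⊗[R] V :=
  TensorProduct.map (LinearMap.mul' R A) LinearMap.id
    ∘ₗ (TensorProduct.assoc R A A V).symm.toLinearMap
    ∘ₗ LinearMap.lTensor A (wcpAux ψ σ)
    ∘ₗ (TensorProduct.assoc R A V (A ⊗[R] V)).toLinearMap

/-- Partial twisted condition LHS: μ_A ∘ (A ⊗ ω) ∘ (ψ ⊗ H) ∘ (H ⊗ ψ),
i.e. (h ⊗ g ⊗ a) ↦ Σ φ(h₍₁₎ ⊗ φ(g₍₁₎ ⊗ a)) ω(h₍₂₎ ⊗ g₍₂₎). -/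
noncomputable def partialTwistedLHS (φ : H ⊗[R] A →ₗ[R] A)
    (ω : H ⊗[R] H →ₗ[R] A) : H ⊗[R] (H ⊗[R] A) →ₗ[R] A :=
  LinearMap.mul' R A
    ∘ₗ LinearMap.lTensor A ω
    ∘ₗ (TensorProduct.assoc R A H H).toLinearMap
    ∘ₗ LinearMap.rTensor H (psiOf φ)
    ∘ₗ (TensorProduct.assoc R H A H).symm.toLinearMap
    ∘ₗ LinearMap.lTensor H (psiOf φ)

/-- Partial twisted condition RHS: μ_A ∘ (A ⊗ φ) ∘ (σ ⊗ A),
i.e. (h ⊗ g ⊗ a) ↦ Σ ω(h₍₁₎ ⊗ g₍₁₎) φ(h₍₂₎g₍₂₎ ⊗ a). -/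
noncomputable def partialTwistedRHS (φ : H ⊗[R] A →ₗ[R] A)
    (ω : H ⊗[R] H →ₗ[R] A) : (H ⊗[R] H) ⊗[R] A →ₗ[R] A :=
  LinearMap.mul' R A
    ∘ₗ LinearMap.lTensor A φ
    ∘ₗ (TensorProduct.assoc R A H A).toLinearMap
    ∘ₗ LinearMap.rTensor A (sigmaOf ω)

/-- Partial cocycle condition LHS:
(h ⊗ g ⊗ l) ↦ Σ φ(h₍₁₎ ⊗ ω(g₍₁₎ ⊗ l₍₁₎)) ω(h₍₂₎ ⊗ g₍₂₎l₍₂₎),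
i.e. μ_A ∘ (A ⊗ ω) ∘ (ψ ⊗ H) ∘ (H ⊗ σ). -/
noncomputable def partialCocycleLHS (φ : H ⊗[R] A →ₗ[R] A)
    (ω : H ⊗[R] H →ₗ[R] A) : H ⊗[R] (H ⊗[R] H) →ₗ[R] A :=
  LinearMap.mul' R A
    ∘ₗ LinearMap.lTensor A ω
    ∘ₗ (TensorProduct.assoc R A H H).toLinearMap
    ∘ₗ LinearMap.rTensor H (psiOf φ)
    ∘ₗ (TensorProduct.assoc R H A H).symm.toLinearMap
    ∘ₗ LinearMap.lTensor H (sigmaOf ω)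

/-- Partial cocycle condition RHS:
(h ⊗ g ⊗ l) ↦ Σ ω(h₍₁₎ ⊗ g₍₁₎) ω(h₍₂₎g₍₂₎ ⊗ l), i.e. μ_A ∘ (A ⊗ ω) ∘ (σ ⊗ H). -/
noncomputable def partialCocycleRHS (ω : H ⊗[R] H →ₗ[R] A) :
    (H ⊗[R] H) ⊗[R] H →ₗ[R] A :=
  LinearMap.mul' R A
    ∘ₗ LinearMap.lTensor A ω
    ∘ₗ (TensorProduct.assoc R A H H).toLinearMap
    ∘ₗ LinearMap.rTensor H (sigmaOf ω)


noncomputable def bigM : A ⊗[R] (A ⊗[R] V) →ₗ[R] A ⊗[R] V :=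
  TensorProduct.map (LinearMap.mul' R A) LinearMap.id
    ∘ₗ (TensorProduct.assoc R A A V).symm.toLinearMap

noncomputable def lam (a : A) : A ⊗[R] V →ₗ[R] A ⊗[R] V :=
  TensorProduct.map (LinearMap.mulLeft R a) LinearMap.id

lemma lam_tmul (a x : A) (y : V) : lam (R := R) a (x ⊗ₜ y) = (a * x) ⊗ₜ y := rfl

lemma bigM_tmul (a x : A) (y : V) : bigM (R := R) (a ⊗ₜ (x ⊗ₜ y)) = (a * x) ⊗ₜ y := by
  simp [bigM]

lemma bigM_lam (a : A) (X : A ⊗[R] V) : bigM (R := R) (a ⊗ₜ X) = lam a X := by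
  induction X using TensorProduct.induction_on with
  | zero => simp
  | tmul x y => simp [bigM_tmul, lam_tmul]
  | add x y hx hy => simp [tmul_add, hx, hy]

lemma lam_lam (a b : A) (X : A ⊗[R] V) : lam a (lam b X) = lam (a * b) X := by
  induction X using TensorProduct.induction_on with
  | zero => simp
  | tmul x y => simp [lam_tmul, mul_assoc]
  | add x y hx hy => simp [hx, hy]

noncomputable def Theta (ψ : V ⊗[R] A →ₗ[R] A ⊗[R] V) :
    (A ⊗[R] V) ⊗[R] A →ₗ[R] A ⊗[R] V :=
  bigM ∘ₗ LinearMap.lTensor A ψ ∘ₗ (TensorProduct.assoc R A V A).toLinearMap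

noncomputable def Gam (σ : V ⊗[R] V →ₗ[R] A ⊗[R] V) :
    (A ⊗[R] V) ⊗[R] V →ₗ[R] A ⊗[R] V :=
  bigM ∘ₗ LinearMap.lTensor A σ ∘ₗ (TensorProduct.assoc R A V V).toLinearMap

variable (ψ : V ⊗[R] A →ₗ[R] A ⊗[R] V) (σ : V ⊗[R] V →ₗ[R] A ⊗[R] V)

lemma Theta_tmul (x : A) (z : V) (c : A) :
    Theta ψ ((x ⊗ₜ z) ⊗ₜ c) = lam x (ψ (z ⊗ₜ c)) := by
  simp [Theta, bigM_lam]

lemma Gam_tmul (x : A) (z : V) (w : V) :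
    Gam σ ((x ⊗ₜ z) ⊗ₜ w) = lam x (σ (z ⊗ₜ w)) := by
  simp [Gam, bigM_lam]

lemma Theta_lam (a : A) (X : A ⊗[R] V) (c : A) :
    Theta ψ (lam a X ⊗ₜ c) = lam a (Theta ψ (X ⊗ₜ c)) := by
  induction X using TensorProduct.induction_on with
  | zero => simp [lam]
  | tmul x z => simp [lam_tmul, Theta_tmul, lam_lam]
  | add x y hx hy =>
      rw [show lam (R := R) a (x + y) = lam a x + lam a y from map_add _ _ _] at *
      simp [add_tmul, hx, hy]

lemma Gam_lam (a : A) (X : A ⊗[R] V) (w : V) :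
    Gam σ (lam a X ⊗ₜ w) = lam a (Gam σ (X ⊗ₜ w)) := by
  induction X using TensorProduct.induction_on with
  | zero => simp [lam]
  | tmul x z => simp [lam_tmul, Gam_tmul, lam_lam]
  | add x y hx hy =>
      rw [show lam (R := R) a (x + y) = lam a x + lam a y from map_add _ _ _] at *
      simp [add_tmul, hx, hy]

lemma twistedLHS_eq : twistedLHS ψ σ = Theta ψ ∘ₗ LinearMap.rTensor A σ := rfl
lemma twistedRHS_eq : twistedRHS ψ σ = wcpAux ψ σ ∘ₗ LinearMap.lTensor V ψ := rfl
lemma cocycleLHS_eq : cocycleLHS σ = Gam σ ∘ₗ LinearMap.rTensor V σ := rfl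
lemma cocycleRHS_eq : cocycleRHS ψ σ = wcpAux ψ σ ∘ₗ LinearMap.lTensor V σ := rfl
lemma wcpAux_eq : wcpAux ψ σ =
    Gam σ ∘ₗ LinearMap.rTensor V ψ ∘ₗ (TensorProduct.assoc R V A V).symm.toLinearMap := rfl
lemma psiMulLHS_eq : psiMulLHS ψ = Theta ψ ∘ₗ LinearMap.rTensor A ψ := rfl
lemma wcpMul_eq : wcpMul ψ σ =
    bigM ∘ₗ LinearMap.lTensor A (wcpAux ψ σ)
      ∘ₗ (TensorProduct.assoc R A V (A ⊗[R] V)).toLinearMap := rfl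

lemma wcpAux_tmul (z : V) (c : A) (u : V) :
    wcpAux ψ σ (z ⊗ₜ (c ⊗ₜ u)) = Gam σ (ψ (z ⊗ₜ c) ⊗ₜ u) := by
  simp [wcpAux_eq]

lemma wcpMul_tmul (a : A) (v : V) (Y : A ⊗[R] V) :
    wcpMul ψ σ ((a ⊗ₜ v) ⊗ₜ Y) = lam a (wcpAux ψ σ (v ⊗ₜ Y)) := by
  simp [wcpMul_eq, bigM_lam]

lemma S1 (X : A ⊗[R] V) (c : A) (u : V) :
    wcpMul ψ σ (X ⊗ₜ (c ⊗ₜ u)) = Gam σ (Theta ψ (X ⊗ₜ c) ⊗ₜ u) := by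
  induction X using TensorProduct.induction_on with
  | zero => simp [Theta]
  | tmul x z => rw [wcpMul_tmul, wcpAux_tmul, Theta_tmul, Gam_lam]
  | add x y hx hy => simp only [add_tmul, map_add, hx, hy]

section Hyp
variable {ψ σ}

lemma hm' (hm : psiMulLHS ψ = psiMulRHS ψ) (v : V) (b d : A) :
    ψ (v ⊗ₜ (b * d)) = Theta ψ (ψ (v ⊗ₜ b) ⊗ₜ d) := by
  have := LinearMap.congr_fun hm ((v ⊗ₜ b) ⊗ₜ d)
  rw [psiMulLHS_eq] at this
  simpa [psiMulRHS] using this.symm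

lemma ht' (ht : twistedLHS ψ σ = twistedRHS ψ σ ∘ₗ (TensorProduct.assoc R V V A).toLinearMap)
    (z w : V) (c : A) :
    Theta ψ (σ (z ⊗ₜ w) ⊗ₜ c) = wcpAux ψ σ (z ⊗ₜ ψ (w ⊗ₜ c)) := by
  have := LinearMap.congr_fun ht ((z ⊗ₜ w) ⊗ₜ c)
  rw [twistedLHS_eq] at this
  simpa [twistedRHS_eq] using this

lemma hc' (hc : cocycleLHS σ = cocycleRHS ψ σ ∘ₗ (TensorProduct.assoc R V V V).toLinearMap)
    (τ z' u : V) :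
    Gam σ (σ (τ ⊗ₜ z') ⊗ₜ u) = wcpAux ψ σ (τ ⊗ₜ σ (z' ⊗ₜ u)) := by
  have := LinearMap.congr_fun hc ((τ ⊗ₜ z') ⊗ₜ u)
  rw [cocycleLHS_eq] at this
  simpa [cocycleRHS_eq] using this

lemma L2 (hm : psiMulLHS ψ = psiMulRHS ψ) (v : V) (b : A) (Y : A ⊗[R] V) :
    wcpAux ψ σ (v ⊗ₜ lam b Y) = wcpMul ψ σ (ψ (v ⊗ₜ b) ⊗ₜ Y) := by
  induction Y using TensorProduct.induction_on with
  | zero => simp [lam, wcpAux_eq]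
  | tmul d y => rw [lam_tmul, wcpAux_tmul, hm' hm, ← S1]
  | add x y hx hy =>
      rw [show lam (R := R) b (x + y) = lam b x + lam b y from map_add _ _ _]
      simp only [tmul_add, map_add, hx, hy]

lemma L1 (ht : twistedLHS ψ σ = twistedRHS ψ σ ∘ₗ (TensorProduct.assoc R V V A).toLinearMap)
    (p' : A ⊗[R] V) (w : V) (c : A) :
    Theta ψ (Gam σ (p' ⊗ₜ w) ⊗ₜ c) = wcpMul ψ σ (p' ⊗ₜ ψ (w ⊗ₜ c)) := by
  induction p' using TensorProduct.induction_on with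
  | zero => simp [Gam, Theta]
  | tmul x z => rw [Gam_tmul, Theta_lam, ht' ht, wcpMul_tmul]
  | add x y hx hy => simp only [add_tmul, map_add, hx, hy]

lemma L3 (hc : cocycleLHS σ = cocycleRHS ψ σ ∘ₗ (TensorProduct.assoc R V V V).toLinearMap)
    (P : A ⊗[R] V) (z' u : V) :
    Gam σ (Gam σ (P ⊗ₜ z') ⊗ₜ u) = wcpMul ψ σ (P ⊗ₜ σ (z' ⊗ₜ u)) := by
  induction P using TensorProduct.induction_on with
  | zero => simp [Gam]
  | tmul x τ => rw [Gam_tmul, Gam_lam, hc' hc, wcpMul_tmul]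
  | add x y hx hy => simp only [add_tmul, map_add, hx, hy]

lemma L4 (hm : psiMulLHS ψ = psiMulRHS ψ)
    (hc : cocycleLHS σ = cocycleRHS ψ σ ∘ₗ (TensorProduct.assoc R V V V).toLinearMap)
    (p q : A ⊗[R] V) (u : V) :
    Gam σ (wcpMul ψ σ (p ⊗ₜ q) ⊗ₜ u) = wcpMul ψ σ (p ⊗ₜ Gam σ (q ⊗ₜ u)) := by
  induction q using TensorProduct.induction_on with
  | zero => simp [Gam, wcpMul_eq, wcpAux_eq]
  | tmul c' z' =>
      induction p using TensorProduct.induction_on with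
      | zero => simp [Gam, wcpMul_eq]
      | tmul x z =>
          rw [wcpMul_tmul, wcpAux_tmul, Gam_lam, L3 hc, Gam_tmul, wcpMul_tmul, L2 hm]
      | add x y hx hy => simp only [add_tmul, map_add, hx, hy]
  | add x y hx hy => simp only [add_tmul, tmul_add, map_add, hx, hy]

theorem stageA (hm : psiMulLHS ψ = psiMulRHS ψ)
    (ht : twistedLHS ψ σ = twistedRHS ψ σ ∘ₗ (TensorProduct.assoc R V V A).toLinearMap)
    (hc : cocycleLHS σ = cocycleRHS ψ σ ∘ₗ (TensorProduct.assoc R V V V).toLinearMap) :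
    wcpMul ψ σ ∘ₗ LinearMap.rTensor (A ⊗[R] V) (wcpMul ψ σ) =
      wcpMul ψ σ ∘ₗ LinearMap.lTensor (A ⊗[R] V) (wcpMul ψ σ)
        ∘ₗ (TensorProduct.assoc R (A ⊗[R] V) (A ⊗[R] V) (A ⊗[R] V)).toLinearMap := by
  apply TensorProduct.ext_threefold
  intro x y z
  simp only [LinearMap.comp_apply, LinearEquiv.coe_coe, TensorProduct.assoc_tmul,
    LinearMap.rTensor_tmul, LinearMap.lTensor_tmul]
  induction x using TensorProduct.induction_on with
  | zero => simp
  | add x x' hx hx' => simp only [add_tmul, map_add, hx, hx']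
  | tmul a v =>
    induction y using TensorProduct.induction_on with
    | zero => simp
    | add y y' hy hy' => simp only [add_tmul, tmul_add, map_add, hy, hy']
    | tmul b w =>
      induction z using TensorProduct.induction_on with
      | zero => simp
      | add z z' hz hz' => simp only [tmul_add, map_add, hz, hz']
      | tmul c u =>
        -- key computation
        rw [wcpMul_tmul, wcpAux_tmul]
        -- LHS : wcpMul (lam a (Gam σ (ψ (v⊗b) ⊗ w)) ⊗ (c ⊗ u))
        rw [show (lam (R := R) a (Gam σ (ψ (v ⊗ₜ b) ⊗ₜ w))) ⊗ₜ[R] (c ⊗ₜ[R] u) =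
          (lam a (Gam σ (ψ (v ⊗ₜ b) ⊗ₜ w))) ⊗ₜ (c ⊗ₜ u) from rfl]
        rw [S1, Theta_lam, Gam_lam, L1 ht, L4 hm hc]
        rw [wcpMul_tmul (ψ := ψ) (σ := σ) b w (c ⊗ₜ u), wcpAux_tmul,
          wcpMul_tmul, L2 hm]
end Hyp

/-! ### Stage B: evaluation lemmas -/
open Coalgebra

set_option synthInstance.maxHeartbeats 1000000
set_option maxHeartbeats 2000000
set_option maxRecDepth 4000

section StageB
variable (φ : H ⊗[R] A →ₗ[R] A) (ω : H ⊗[R] H →ₗ[R] A)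

lemma psiOf_tmul (h : H) (a : A) {ι : Type*} (r : Coalgebra.Repr R h ι) :
    psiOf φ (h ⊗ₜ a) = ∑ i ∈ r.index, φ (r.left i ⊗ₜ a) ⊗ₜ r.right i := by
  rw [psiOf]
  simp only [LinearMap.comp_apply, LinearMap.rTensor_tmul, ← r.eq, sum_tmul, map_sum]
  simp

lemma sigmaOf_tmul (h g : H) {ι κ : Type*} (rh : Coalgebra.Repr R h ι) (rg : Coalgebra.Repr R g κ) :
    sigmaOf ω (h ⊗ₜ g) = ∑ i ∈ rh.index, ∑ j ∈ rg.index,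
      ω (rh.left i ⊗ₜ rg.left j) ⊗ₜ (rh.right i * rg.right j) := by
  rw [sigmaOf]
  simp only [LinearMap.comp_apply, TensorProduct.map_tmul, ← rh.eq, ← rg.eq, sum_tmul,
    tmul_sum, map_sum]
  simp only [LinearEquiv.coe_coe, tensorTensorTensorComm_tmul, TensorProduct.map_tmul,
    LinearMap.mul'_apply]
  rw [Finset.sum_comm]

/-- A representation of `comul (x*y)` from representations of the factors. -/
noncomputable def reprMul {x y : H} {ι κ : Type*} (rx : Coalgebra.Repr R x ι)
    (ry : Coalgebra.Repr R y κ) :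
    Coalgebra.Repr R (x * y) (ι × κ) where
  index := rx.index ×ˢ ry.index
  left := fun p => rx.left p.1 * ry.left p.2
  right := fun p => rx.right p.1 * ry.right p.2
  eq := by
    have : CoalgebraStruct.comul (R := R) (x * y) = comul x * comul y := Bialgebra.comul_mul x y
    rw [this, ← rx.eq, ← ry.eq, Finset.sum_mul_sum]
    rw [Finset.sum_product]
    simp [Algebra.TensorProduct.tmul_mul_tmul]

end StageB

section StageB2
variable (φ : H ⊗[R] A →ₗ[R] A) (ω : H ⊗[R] H →ₗ[R] A)

noncomputable def phiR (a : A) : H →ₗ[R] A := φ ∘ₗ (TensorProduct.mk R H A).flip a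

lemma phiR_apply (a : A) (x : H) : phiR φ a x = φ (x ⊗ₜ a) := rfl

noncomputable def LB (a b : A) : H ⊗[R] (H ⊗[R] H) →ₗ[R] A ⊗[R] H :=
  bigM ∘ₗ TensorProduct.map (phiR φ a) (TensorProduct.map (phiR φ b) LinearMap.id)

lemma LB_tmul (a b : A) (x y z : H) :
    LB φ a b (x ⊗ₜ (y ⊗ₜ z)) = (φ (x ⊗ₜ a) * φ (y ⊗ₜ b)) ⊗ₜ z := by
  simp [LB, phiR, bigM_tmul]

lemma h2' (h2 : IsPartiallyMultiplicative φ) (x : H) (a b : A) {ι : Type*} (rx : Coalgebra.Repr R x ι) :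
    φ (x ⊗ₜ (a * b)) =
      ∑ j ∈ rx.index, φ (rx.left j ⊗ₜ a) * φ (rx.right j ⊗ₜ b) := by
  have := LinearMap.congr_fun h2 (x ⊗ₜ (a ⊗ₜ b))
  simp only [LinearMap.comp_apply, LinearMap.lTensor_tmul, LinearMap.mul'_apply,
    LinearMap.rTensor_tmul, ← rx.eq, sum_tmul, map_sum, LinearEquiv.coe_coe,
    tensorTensorTensorComm_tmul, TensorProduct.map_tmul] at this
  simpa using this

lemma hmB (h2 : IsPartiallyMultiplicative φ) :
    psiMulLHS (psiOf φ) = psiMulRHS (psiOf φ) := by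
  apply TensorProduct.ext_threefold
  intro h a b
  set r := ℛ R h with hr
  set rl : (i : H × H) → Coalgebra.Repr R (r.left i) (H × H) := fun i => ℛ R (r.left i)
  set rr : (i : H × H) → Coalgebra.Repr R (r.right i) (H × H) := fun i => ℛ R (r.right i)
  have key := congrArg (LB φ a b) (Coalgebra.sum_tmul_tmul_eq r rl rr)
  simp only [map_sum, LB_tmul] at key
  have lhs : psiMulLHS (psiOf φ) ((h ⊗ₜ a) ⊗ₜ b) =
      ∑ i ∈ r.index, ∑ k ∈ (rr i).index,
        (φ (r.left i ⊗ₜ a) * φ ((rr i).left k ⊗ₜ b)) ⊗ₜ (rr i).right k := by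
    rw [psiMulLHS_eq]
    simp only [LinearMap.comp_apply, LinearMap.rTensor_tmul]
    rw [psiOf_tmul φ h a r]
    simp only [sum_tmul, map_sum, Theta_tmul]
    refine Finset.sum_congr rfl fun i _ => ?_
    rw [psiOf_tmul φ (r.right i) b (rr i), map_sum]
    refine Finset.sum_congr rfl fun k _ => ?_
    rw [lam_tmul]
  have rhs : psiMulRHS (psiOf φ) ((h ⊗ₜ a) ⊗ₜ b) =
      ∑ i ∈ r.index, ∑ k ∈ (rl i).index,
        (φ ((rl i).left k ⊗ₜ a) * φ ((rl i).right k ⊗ₜ b)) ⊗ₜ r.right i := by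
    rw [psiMulRHS]
    simp only [LinearMap.comp_apply, LinearEquiv.coe_coe, TensorProduct.assoc_tmul,
      LinearMap.lTensor_tmul, LinearMap.mul'_apply]
    rw [psiOf_tmul φ h (a * b) r]
    refine Finset.sum_congr rfl fun i _ => ?_
    rw [h2' φ h2 (r.left i) a b (rl i), sum_tmul]
  rw [lhs, rhs, key]
end StageB2

section StageB3
variable (φ : H ⊗[R] A →ₗ[R] A) (ω : H ⊗[R] H →ₗ[R] A)

/-- `W (x ⊗ t) = Σ x₁ ⊗ (x₂ ⊗ t)`. -/
noncomputable def Wmap : H ⊗[R] H →ₗ[R] H ⊗[R] (H ⊗[R] H) :=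
  (TensorProduct.assoc R H H H).toLinearMap
    ∘ₗ LinearMap.rTensor H (Coalgebra.comul : H →ₗ[R] H ⊗[R] H)

lemma Wmap_tmul (x t : H) {ι : Type*} (rx : Coalgebra.Repr R x ι) :
    Wmap (R := R) (x ⊗ₜ t) = ∑ k ∈ rx.index, rx.left k ⊗ₜ (rx.right k ⊗ₜ t) := by
  rw [Wmap]
  simp only [LinearMap.comp_apply, LinearMap.rTensor_tmul, ← rx.eq, sum_tmul, map_sum]
  simp

lemma comul_expand (h : H) {ι κ : Type*} (r : Coalgebra.Repr R h ι)
    (rr : (i : ι) → Coalgebra.Repr R (r.right i) κ) :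
    LinearMap.lTensor H (Coalgebra.comul (R := R)) (Coalgebra.comul h) =
      ∑ i ∈ r.index, ∑ k ∈ (rr i).index,
        r.left i ⊗ₜ ((rr i).left k ⊗ₜ (rr i).right k) := by
  rw [← r.eq, map_sum]
  refine Finset.sum_congr rfl fun i _ => ?_
  rw [LinearMap.lTensor_tmul, ← (rr i).eq, tmul_sum]

noncomputable def TLm (a : A) :
    (H ⊗[R] (H ⊗[R] H)) ⊗[R] (H ⊗[R] (H ⊗[R] H)) →ₗ[R] A ⊗[R] H :=
  bigM ∘ₗ TensorProduct.map ω
      (TensorProduct.map ((phiR φ a) ∘ₗ LinearMap.mul' R H) (LinearMap.mul' R H)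
        ∘ₗ (TensorProduct.tensorTensorTensorComm R H H H H).toLinearMap)
    ∘ₗ (TensorProduct.tensorTensorTensorComm R H (H ⊗[R] H) H (H ⊗[R] H)).toLinearMap

lemma TLm_tmul (a : A) (u v w x y z : H) :
    TLm φ ω a ((u ⊗ₜ (v ⊗ₜ w)) ⊗ₜ (x ⊗ₜ (y ⊗ₜ z))) =
      (ω (u ⊗ₜ x) * φ ((v * y) ⊗ₜ a)) ⊗ₜ (w * z) := by
  simp [TLm, phiR, bigM_tmul]

noncomputable def TRm (a : A) :
    (H ⊗[R] (H ⊗[R] H)) ⊗[R] (H ⊗[R] (H ⊗[R] H)) →ₗ[R] A ⊗[R] H :=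
  bigM ∘ₗ TensorProduct.map (φ ∘ₗ LinearMap.lTensor H (phiR φ a))
      (TensorProduct.map ω (LinearMap.mul' R H)
        ∘ₗ (TensorProduct.tensorTensorTensorComm R H H H H).toLinearMap)
    ∘ₗ (TensorProduct.tensorTensorTensorComm R H (H ⊗[R] H) H (H ⊗[R] H)).toLinearMap

lemma TRm_tmul (a : A) (u v w x y z : H) :
    TRm φ ω a ((u ⊗ₜ (v ⊗ₜ w)) ⊗ₜ (x ⊗ₜ (y ⊗ₜ z))) =
      (φ (u ⊗ₜ φ (x ⊗ₜ a)) * ω (v ⊗ₜ y)) ⊗ₜ (w * z) := by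
  simp [TRm, phiR, bigM_tmul]

lemma pTwR_tmul (s t : H) (a : A) {ι κ : Type*} (rs : Coalgebra.Repr R s ι) (rt : Coalgebra.Repr R t κ) :
    partialTwistedRHS φ ω ((s ⊗ₜ t) ⊗ₜ a) =
      ∑ k ∈ rs.index, ∑ l ∈ rt.index,
        ω (rs.left k ⊗ₜ rt.left l) * φ ((rs.right k * rt.right l) ⊗ₜ a) := by
  rw [partialTwistedRHS]
  simp only [LinearMap.comp_apply, LinearMap.rTensor_tmul]
  rw [sigmaOf_tmul ω s t rs rt]
  simp only [sum_tmul, map_sum, LinearEquiv.coe_coe, TensorProduct.assoc_tmul,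
    LinearMap.lTensor_tmul, LinearMap.mul'_apply]

lemma pTwL_tmul (s t : H) (a : A) {ι κ : Type*} (rs : Coalgebra.Repr R s ι) (rt : Coalgebra.Repr R t κ) :
    partialTwistedLHS φ ω (s ⊗ₜ (t ⊗ₜ a)) =
      ∑ k ∈ rs.index, ∑ l ∈ rt.index,
        φ (rs.left k ⊗ₜ φ (rt.left l ⊗ₜ a)) * ω (rs.right k ⊗ₜ rt.right l) := by
  rw [partialTwistedLHS]
  simp only [LinearMap.comp_apply, LinearMap.lTensor_tmul]
  rw [psiOf_tmul φ t a rt]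
  simp only [tmul_sum, map_sum]
  rw [Finset.sum_comm]
  refine Finset.sum_congr rfl fun l _ => ?_
  simp only [LinearEquiv.coe_coe, TensorProduct.assoc_symm_tmul, LinearMap.rTensor_tmul]
  rw [psiOf_tmul φ s _ rs]
  simp only [sum_tmul, map_sum, TensorProduct.assoc_tmul, LinearMap.lTensor_tmul,
    LinearMap.mul'_apply]

end StageB3

section SumHelpers
variable {M : Type*} [AddCommMonoid M]

lemma sum_swap_blocks {α β : Type*} {γ : α → Type*} {δ : β → Type*}
    (s : Finset α) (t : Finset β) (S : ∀ a, Finset (γ a)) (T : ∀ b, Finset (δ b))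
    (f : ∀ (a : α) (b : β), γ a → δ b → M) :
    (∑ i ∈ s, ∑ j ∈ t, ∑ k ∈ S i, ∑ l ∈ T j, f i j k l) =
      ∑ j ∈ t, ∑ l ∈ T j, ∑ i ∈ s, ∑ k ∈ S i, f i j k l := by
  rw [Finset.sum_comm]
  refine Finset.sum_congr rfl fun j _ => ?_
  exact (Finset.sum_congr rfl fun i _ => Finset.sum_comm).trans Finset.sum_comm

lemma sum_swap3 {α β : Type*} {γ : α → Type*}
    (s : Finset α) (t : Finset β) (S : ∀ a, Finset (γ a))
    (f : ∀ (a : α), γ a → β → M) :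
    (∑ i ∈ s, ∑ k ∈ S i, ∑ l ∈ t, f i k l) =
      ∑ l ∈ t, ∑ i ∈ s, ∑ k ∈ S i, f i k l := by
  exact (Finset.sum_congr rfl fun i _ => Finset.sum_comm).trans Finset.sum_comm

end SumHelpers

section StageB4
variable (φ : H ⊗[R] A →ₗ[R] A) (ω : H ⊗[R] H →ₗ[R] A)

lemma reprMul_left {x y : H} {ι κ : Type*} (rx : Coalgebra.Repr R x ι) (ry : Coalgebra.Repr R y κ)
    (p : ι × κ) : (reprMul rx ry).left p = rx.left p.1 * ry.left p.2 := rfl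
lemma reprMul_right {x y : H} {ι κ : Type*} (rx : Coalgebra.Repr R x ι) (ry : Coalgebra.Repr R y κ)
    (p : ι × κ) : (reprMul rx ry).right p = rx.right p.1 * ry.right p.2 := rfl

lemma reprMul_sum {M : Type*} [AddCommMonoid M] {x y : H}
    {ι κ : Type*} (rx : Coalgebra.Repr R x ι) (ry : Coalgebra.Repr R y κ) (f : ι × κ → M) :
    ∑ p ∈ (reprMul rx ry).index, f p = ∑ k ∈ rx.index, ∑ l ∈ ry.index, f (k, l) :=
  Finset.sum_product _ _ _

lemma EL (h g : H) (a : A) :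
    twistedLHS (psiOf φ) (sigmaOf ω) ((h ⊗ₜ g) ⊗ₜ a) =
      TLm φ ω a (LinearMap.lTensor H (Coalgebra.comul (R := R)) (Coalgebra.comul h) ⊗ₜ
        LinearMap.lTensor H (Coalgebra.comul (R := R)) (Coalgebra.comul g)) := by
  set rh := ℛ R h
  set rg := ℛ R g
  set hr : (i : H × H) → Coalgebra.Repr R (rh.right i) (H × H) := fun i => ℛ R (rh.right i) with hhr
  set gr : (j : H × H) → Coalgebra.Repr R (rg.right j) (H × H) := fun j => ℛ R (rg.right j) with hgr
  have lhs : twistedLHS (psiOf φ) (sigmaOf ω) ((h ⊗ₜ g) ⊗ₜ a) =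
      ∑ i ∈ rh.index, ∑ j ∈ rg.index, ∑ k ∈ (hr i).index, ∑ l ∈ (gr j).index,
        (ω (rh.left i ⊗ₜ rg.left j) * φ (((hr i).left k * (gr j).left l) ⊗ₜ a)) ⊗ₜ
          ((hr i).right k * (gr j).right l) := by
    rw [twistedLHS_eq]
    simp only [LinearMap.comp_apply, LinearMap.rTensor_tmul]
    rw [sigmaOf_tmul ω h g rh rg]
    simp only [sum_tmul, map_sum, Theta_tmul]
    refine Finset.sum_congr rfl fun i _ => Finset.sum_congr rfl fun j _ => ?_
    rw [psiOf_tmul φ _ a (reprMul (hr i) (gr j)), map_sum, reprMul_sum]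
    simp only [reprMul_left, reprMul_right, lam_tmul]
  have rhs : TLm φ ω a (LinearMap.lTensor H (Coalgebra.comul (R := R)) (Coalgebra.comul h) ⊗ₜ
        LinearMap.lTensor H (Coalgebra.comul (R := R)) (Coalgebra.comul g)) =
      ∑ j ∈ rg.index, ∑ l ∈ (gr j).index, ∑ i ∈ rh.index, ∑ k ∈ (hr i).index,
        (ω (rh.left i ⊗ₜ rg.left j) * φ (((hr i).left k * (gr j).left l) ⊗ₜ a)) ⊗ₜ
          ((hr i).right k * (gr j).right l) := by
    rw [comul_expand h rh hr, comul_expand g rg gr]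
    simp only [sum_tmul, tmul_sum, map_sum, TLm_tmul]
  rw [lhs, rhs, sum_swap_blocks]

lemma ER (h g : H) (a : A) :
    twistedRHS (psiOf φ) (sigmaOf ω) (h ⊗ₜ (g ⊗ₜ a)) =
      TRm φ ω a (LinearMap.lTensor H (Coalgebra.comul (R := R)) (Coalgebra.comul h) ⊗ₜ
        LinearMap.lTensor H (Coalgebra.comul (R := R)) (Coalgebra.comul g)) := by
  set rh := ℛ R h
  set rg := ℛ R g
  set hr : (i : H × H) → Coalgebra.Repr R (rh.right i) (H × H) := fun i => ℛ R (rh.right i) with hhr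
  set gr : (j : H × H) → Coalgebra.Repr R (rg.right j) (H × H) := fun j => ℛ R (rg.right j) with hgr
  have lhs : twistedRHS (psiOf φ) (sigmaOf ω) (h ⊗ₜ (g ⊗ₜ a)) =
      ∑ j ∈ rg.index, ∑ i ∈ rh.index, ∑ k ∈ (hr i).index, ∑ l ∈ (gr j).index,
        (φ (rh.left i ⊗ₜ φ (rg.left j ⊗ₜ a)) * ω ((hr i).left k ⊗ₜ (gr j).left l)) ⊗ₜ
          ((hr i).right k * (gr j).right l) := by
    rw [twistedRHS_eq]
    simp only [LinearMap.comp_apply, LinearMap.lTensor_tmul]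
    rw [psiOf_tmul φ g a rg]
    simp only [tmul_sum, map_sum, wcpAux_tmul]
    refine Finset.sum_congr rfl fun j _ => ?_
    rw [psiOf_tmul φ h _ rh]
    simp only [sum_tmul, map_sum, Gam_tmul]
    refine Finset.sum_congr rfl fun i _ => ?_
    rw [sigmaOf_tmul ω _ _ (hr i) (gr j), map_sum]
    simp only [map_sum, lam_tmul]
  have rhs : TRm φ ω a (LinearMap.lTensor H (Coalgebra.comul (R := R)) (Coalgebra.comul h) ⊗ₜ
        LinearMap.lTensor H (Coalgebra.comul (R := R)) (Coalgebra.comul g)) =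
      ∑ j ∈ rg.index, ∑ l ∈ (gr j).index, ∑ i ∈ rh.index, ∑ k ∈ (hr i).index,
        (φ (rh.left i ⊗ₜ φ (rg.left j ⊗ₜ a)) * ω ((hr i).left k ⊗ₜ (gr j).left l)) ⊗ₜ
          ((hr i).right k * (gr j).right l) := by
    rw [comul_expand h rh hr, comul_expand g rg gr]
    simp only [sum_tmul, tmul_sum, map_sum, TRm_tmul]
  rw [lhs, rhs]
  exact Finset.sum_congr rfl fun j _ => sum_swap3 _ _ _ _

lemma TTm (a : A)
    (h3 : partialTwistedLHS φ ω ∘ₗ (TensorProduct.assoc R H H A).toLinearMap =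
      partialTwistedRHS φ ω) :
    TLm φ ω a ∘ₗ TensorProduct.map (Wmap (R := R)) (Wmap (R := R)) =
      TRm φ ω a ∘ₗ TensorProduct.map (Wmap (R := R)) (Wmap (R := R)) := by
  apply TensorProduct.ext'
  intro X Y
  induction X using TensorProduct.induction_on with
  | zero => simp
  | add x x' hx hx' => simp only [add_tmul, map_add, hx, hx']
  | tmul s t =>
    induction Y using TensorProduct.induction_on with
    | zero => simp
    | add y y' hy hy' => simp only [tmul_add, map_add, hy, hy']
    | tmul u v =>
      set rs := ℛ R s
      set ru := ℛ R u
      have key := LinearMap.congr_fun h3 ((s ⊗ₜ u) ⊗ₜ a)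
      simp only [LinearMap.comp_apply, LinearEquiv.coe_coe, TensorProduct.assoc_tmul] at key
      rw [pTwL_tmul φ ω s u a rs ru, pTwR_tmul φ ω s u a rs ru] at key
      simp only [LinearMap.comp_apply, TensorProduct.map_tmul]
      rw [Wmap_tmul s t rs, Wmap_tmul u v ru]
      simp only [sum_tmul, tmul_sum, map_sum, TLm_tmul, TRm_tmul]
      simp only [← sum_tmul]
      congr 1
      rw [Finset.sum_comm, ← key]
      exact Finset.sum_comm

lemma htB (h3 : partialTwistedLHS φ ω ∘ₗ (TensorProduct.assoc R H H A).toLinearMap =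
      partialTwistedRHS φ ω) :
    twistedLHS (psiOf φ) (sigmaOf ω) =
      twistedRHS (psiOf φ) (sigmaOf ω) ∘ₗ (TensorProduct.assoc R H H A).toLinearMap := by
  apply TensorProduct.ext_threefold
  intro h g a
  have wh : Wmap (R := R) (Coalgebra.comul h) =
      LinearMap.lTensor H Coalgebra.comul (Coalgebra.comul h) := by
    rw [Wmap]; exact Coalgebra.coassoc_apply h
  have wg : Wmap (R := R) (Coalgebra.comul g) =
      LinearMap.lTensor H Coalgebra.comul (Coalgebra.comul g) := by
    rw [Wmap]; exact Coalgebra.coassoc_apply g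
  have key := LinearMap.congr_fun (TTm φ ω a h3) ((Coalgebra.comul h) ⊗ₜ (Coalgebra.comul g))
  simp only [LinearMap.comp_apply, TensorProduct.map_tmul, wh, wg] at key
  simp only [LinearMap.comp_apply, LinearEquiv.coe_coe, TensorProduct.assoc_tmul]
  rw [EL φ ω h g a, ER φ ω h g a, key]

end StageB4

section StageB5
variable (φ : H ⊗[R] A →ₗ[R] A) (ω : H ⊗[R] H →ₗ[R] A)

lemma pCoR_tmul (s u p : H) {ι κ : Type*} (rs : Coalgebra.Repr R s ι) (ru : Coalgebra.Repr R u κ) :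
    partialCocycleRHS ω ((s ⊗ₜ u) ⊗ₜ p) =
      ∑ k ∈ rs.index, ∑ l ∈ ru.index,
        ω (rs.left k ⊗ₜ ru.left l) * ω ((rs.right k * ru.right l) ⊗ₜ p) := by
  rw [partialCocycleRHS]
  simp only [LinearMap.comp_apply, LinearMap.rTensor_tmul]
  rw [sigmaOf_tmul ω s u rs ru]
  simp only [sum_tmul, map_sum, LinearEquiv.coe_coe, TensorProduct.assoc_tmul,
    LinearMap.lTensor_tmul, LinearMap.mul'_apply]

lemma pCoL_tmul (s u p : H) {ι κ μ : Type*} (rs : Coalgebra.Repr R s ι) (ru : Coalgebra.Repr R u κ)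
    (rp : Coalgebra.Repr R p μ) :
    partialCocycleLHS φ ω (s ⊗ₜ (u ⊗ₜ p)) =
      ∑ l ∈ ru.index, ∑ m ∈ rp.index, ∑ k ∈ rs.index,
        φ (rs.left k ⊗ₜ ω (ru.left l ⊗ₜ rp.left m)) *
          ω (rs.right k ⊗ₜ (ru.right l * rp.right m)) := by
  rw [partialCocycleLHS]
  simp only [LinearMap.comp_apply, LinearMap.lTensor_tmul]
  rw [sigmaOf_tmul ω u p ru rp]
  simp only [tmul_sum, map_sum]
  refine Finset.sum_congr rfl fun l _ => Finset.sum_congr rfl fun m _ => ?_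
  simp only [LinearEquiv.coe_coe, TensorProduct.assoc_symm_tmul, LinearMap.rTensor_tmul]
  rw [psiOf_tmul φ s _ rs]
  simp only [sum_tmul, map_sum, TensorProduct.assoc_tmul, LinearMap.lTensor_tmul,
    LinearMap.mul'_apply]

/-- `Ξ ((u⊗(v⊗w))⊗(x⊗(y⊗z))) = ω (u⊗x) ⊗ ((v*y) ⊗ (w*z))`. -/
noncomputable def Xim : (H ⊗[R] (H ⊗[R] H)) ⊗[R] (H ⊗[R] (H ⊗[R] H)) →ₗ[R] A ⊗[R] (H ⊗[R] H) :=
  TensorProduct.map ω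
      (TensorProduct.map (LinearMap.mul' R H) (LinearMap.mul' R H)
        ∘ₗ (TensorProduct.tensorTensorTensorComm R H H H H).toLinearMap)
    ∘ₗ (TensorProduct.tensorTensorTensorComm R H (H ⊗[R] H) H (H ⊗[R] H)).toLinearMap

lemma Xim_tmul (u v w x y z : H) :
    Xim ω ((u ⊗ₜ (v ⊗ₜ w)) ⊗ₜ (x ⊗ₜ (y ⊗ₜ z))) = ω (u ⊗ₜ x) ⊗ₜ ((v * y) ⊗ₜ (w * z)) := by
  simp [Xim]

noncomputable def ULm :
    (H ⊗[R] (H ⊗[R] H)) ⊗[R] ((H ⊗[R] (H ⊗[R] H)) ⊗[R] (H ⊗[R] H)) →ₗ[R] A ⊗[R] H :=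
  bigM ∘ₗ LinearMap.lTensor A
      (TensorProduct.map ω (LinearMap.mul' R H)
        ∘ₗ (TensorProduct.tensorTensorTensorComm R H H H H).toLinearMap)
    ∘ₗ (TensorProduct.assoc R A (H ⊗[R] H) (H ⊗[R] H)).toLinearMap
    ∘ₗ LinearMap.rTensor (H ⊗[R] H) (Xim ω)
    ∘ₗ (TensorProduct.assoc R (H ⊗[R] (H ⊗[R] H)) (H ⊗[R] (H ⊗[R] H))
        (H ⊗[R] H)).symm.toLinearMap

lemma ULm_tmul (u v w x y z s t : H) :
    ULm ω ((u ⊗ₜ (v ⊗ₜ w)) ⊗ₜ ((x ⊗ₜ (y ⊗ₜ z)) ⊗ₜ (s ⊗ₜ t))) =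
      (ω (u ⊗ₜ x) * ω ((v * y) ⊗ₜ s)) ⊗ₜ ((w * z) * t) := by
  simp only [ULm, LinearMap.comp_apply, LinearEquiv.coe_coe, TensorProduct.assoc_symm_tmul,
    LinearMap.rTensor_tmul, Xim_tmul, TensorProduct.assoc_tmul, LinearMap.lTensor_tmul,
    tensorTensorTensorComm_tmul, TensorProduct.map_tmul, LinearMap.mul'_apply]
  rw [bigM_tmul]

noncomputable def URm :
    (H ⊗[R] (H ⊗[R] H)) ⊗[R] ((H ⊗[R] (H ⊗[R] H)) ⊗[R] (H ⊗[R] (H ⊗[R] H))) →ₗ[R] A ⊗[R] H :=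
  bigM ∘ₗ TensorProduct.map φ
      (TensorProduct.map ω (LinearMap.mul' R H)
        ∘ₗ (TensorProduct.tensorTensorTensorComm R H H H H).toLinearMap)
    ∘ₗ (TensorProduct.tensorTensorTensorComm R H (H ⊗[R] H) A (H ⊗[R] H)).toLinearMap
    ∘ₗ LinearMap.lTensor (H ⊗[R] (H ⊗[R] H)) (Xim ω)

lemma URm_tmul (u v w x y z s p q : H) :
    URm φ ω ((u ⊗ₜ (v ⊗ₜ w)) ⊗ₜ ((x ⊗ₜ (y ⊗ₜ z)) ⊗ₜ (s ⊗ₜ (p ⊗ₜ q)))) =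
      (φ (u ⊗ₜ ω (x ⊗ₜ s)) * ω (v ⊗ₜ (y * p))) ⊗ₜ (w * (z * q)) := by
  simp only [URm, LinearMap.comp_apply, LinearMap.lTensor_tmul, Xim_tmul, LinearEquiv.coe_coe,
    tensorTensorTensorComm_tmul, TensorProduct.map_tmul, LinearMap.mul'_apply]
  rw [bigM_tmul]

end StageB5

section StageB6
variable (φ : H ⊗[R] A →ₗ[R] A) (ω : H ⊗[R] H →ₗ[R] A)

lemma ELc (h g l : H) :
    cocycleLHS (sigmaOf ω) ((h ⊗ₜ g) ⊗ₜ l) =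
      ULm ω (LinearMap.lTensor H (Coalgebra.comul (R := R)) (Coalgebra.comul h) ⊗ₜ
        (LinearMap.lTensor H (Coalgebra.comul (R := R)) (Coalgebra.comul g) ⊗ₜ
          (Coalgebra.comul (R := R) l))) := by
  set rh := ℛ R h
  set rg := ℛ R g
  set rl := ℛ R l
  set hr : (i : H × H) → Coalgebra.Repr R (rh.right i) (H × H) := fun i => ℛ R (rh.right i) with hhr
  set gr : (j : H × H) → Coalgebra.Repr R (rg.right j) (H × H) := fun j => ℛ R (rg.right j) with hgr
  have lhs : cocycleLHS (sigmaOf ω) ((h ⊗ₜ g) ⊗ₜ l) =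
      ∑ i ∈ rh.index, ∑ j ∈ rg.index, ∑ k ∈ (hr i).index, ∑ l' ∈ (gr j).index,
        ∑ m ∈ rl.index,
        (ω (rh.left i ⊗ₜ rg.left j) * ω (((hr i).left k * (gr j).left l') ⊗ₜ rl.left m)) ⊗ₜ
          ((hr i).right k * (gr j).right l' * rl.right m) := by
    rw [cocycleLHS_eq]
    simp only [LinearMap.comp_apply, LinearMap.rTensor_tmul]
    rw [sigmaOf_tmul ω h g rh rg]
    simp only [sum_tmul, map_sum, Gam_tmul]
    refine Finset.sum_congr rfl fun i _ => Finset.sum_congr rfl fun j _ => ?_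
    rw [sigmaOf_tmul ω _ l (reprMul (hr i) (gr j)) rl]
    simp only [map_sum]
    rw [reprMul_sum]
    simp only [reprMul_left, reprMul_right, lam_tmul]
  have rhs : ULm ω (LinearMap.lTensor H (Coalgebra.comul (R := R)) (Coalgebra.comul h) ⊗ₜ
        (LinearMap.lTensor H (Coalgebra.comul (R := R)) (Coalgebra.comul g) ⊗ₜ
          (Coalgebra.comul (R := R) l))) =
      ∑ m ∈ rl.index, ∑ j ∈ rg.index, ∑ l' ∈ (gr j).index, ∑ i ∈ rh.index,
        ∑ k ∈ (hr i).index,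
        (ω (rh.left i ⊗ₜ rg.left j) * ω (((hr i).left k * (gr j).left l') ⊗ₜ rl.left m)) ⊗ₜ
          ((hr i).right k * (gr j).right l' * rl.right m) := by
    rw [comul_expand h rh hr, comul_expand g rg gr, ← rl.eq]
    simp only [sum_tmul, tmul_sum, map_sum, ULm_tmul]
  rw [lhs, rhs]
  refine Eq.trans (Finset.sum_congr rfl fun i _ => Finset.sum_congr rfl fun j _ =>
    Finset.sum_congr rfl fun k _ => Finset.sum_comm) ?_
  refine Eq.trans (Finset.sum_congr rfl fun i _ => Finset.sum_congr rfl fun j _ =>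
    Finset.sum_comm) ?_
  refine Eq.trans (Finset.sum_congr rfl fun i _ => Finset.sum_comm) ?_
  refine Eq.trans Finset.sum_comm ?_
  exact Finset.sum_congr rfl fun m _ => sum_swap_blocks _ _ _ _ _

lemma ERc (h g l : H) :
    cocycleRHS (psiOf φ) (sigmaOf ω) (h ⊗ₜ (g ⊗ₜ l)) =
      URm φ ω (LinearMap.lTensor H (Coalgebra.comul (R := R)) (Coalgebra.comul h) ⊗ₜ
        (LinearMap.lTensor H (Coalgebra.comul (R := R)) (Coalgebra.comul g) ⊗ₜ
          LinearMap.lTensor H (Coalgebra.comul (R := R)) (Coalgebra.comul l))) := by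
  set rh := ℛ R h
  set rg := ℛ R g
  set rl := ℛ R l
  set hr : (i : H × H) → Coalgebra.Repr R (rh.right i) (H × H) := fun i => ℛ R (rh.right i) with hhr
  set gr : (j : H × H) → Coalgebra.Repr R (rg.right j) (H × H) := fun j => ℛ R (rg.right j) with hgr
  set lr : (m : H × H) → Coalgebra.Repr R (rl.right m) (H × H) := fun m => ℛ R (rl.right m) with hlr
  have lhs : cocycleRHS (psiOf φ) (sigmaOf ω) (h ⊗ₜ (g ⊗ₜ l)) =
      ∑ j ∈ rg.index, ∑ m ∈ rl.index, ∑ i ∈ rh.index, ∑ k ∈ (hr i).index,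
        ∑ l' ∈ (gr j).index, ∑ m' ∈ (lr m).index,
        (φ (rh.left i ⊗ₜ ω (rg.left j ⊗ₜ rl.left m)) *
          ω ((hr i).left k ⊗ₜ ((gr j).left l' * (lr m).left m'))) ⊗ₜ
          ((hr i).right k * ((gr j).right l' * (lr m).right m')) := by
    rw [cocycleRHS_eq]
    simp only [LinearMap.comp_apply, LinearMap.lTensor_tmul]
    rw [sigmaOf_tmul ω g l rg rl]
    simp only [tmul_sum, map_sum, wcpAux_tmul]
    refine Finset.sum_congr rfl fun j _ => Finset.sum_congr rfl fun m _ => ?_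
    rw [psiOf_tmul φ h _ rh]
    simp only [sum_tmul, map_sum, Gam_tmul]
    refine Finset.sum_congr rfl fun i _ => ?_
    rw [sigmaOf_tmul ω _ _ (hr i) (reprMul (gr j) (lr m)), map_sum]
    refine Finset.sum_congr rfl fun k _ => ?_
    rw [reprMul_sum, map_sum]
    simp only [map_sum, reprMul_left, reprMul_right, lam_tmul]
  have rhs : URm φ ω (LinearMap.lTensor H (Coalgebra.comul (R := R)) (Coalgebra.comul h) ⊗ₜ
        (LinearMap.lTensor H (Coalgebra.comul (R := R)) (Coalgebra.comul g) ⊗ₜ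
          LinearMap.lTensor H (Coalgebra.comul (R := R)) (Coalgebra.comul l))) =
      ∑ m ∈ rl.index, ∑ m' ∈ (lr m).index, ∑ j ∈ rg.index, ∑ l' ∈ (gr j).index,
        ∑ i ∈ rh.index, ∑ k ∈ (hr i).index,
        (φ (rh.left i ⊗ₜ ω (rg.left j ⊗ₜ rl.left m)) *
          ω ((hr i).left k ⊗ₜ ((gr j).left l' * (lr m).left m'))) ⊗ₜ
          ((hr i).right k * ((gr j).right l' * (lr m).right m')) := by
    rw [comul_expand h rh hr, comul_expand g rg gr, comul_expand l rl lr]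
    simp only [sum_tmul, tmul_sum, map_sum, URm_tmul]
  rw [lhs, rhs]
  refine Eq.trans Finset.sum_comm ?_
  refine Finset.sum_congr rfl fun m _ => ?_
  refine Eq.trans (Finset.sum_congr rfl fun j _ => Finset.sum_congr rfl fun i _ =>
    Finset.sum_congr rfl fun k _ => Finset.sum_comm) ?_
  refine Eq.trans (Finset.sum_congr rfl fun j _ => Finset.sum_congr rfl fun i _ =>
    Finset.sum_comm) ?_
  refine Eq.trans (Finset.sum_congr rfl fun j _ => Finset.sum_comm) ?_
  refine Eq.trans Finset.sum_comm ?_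
  refine Finset.sum_congr rfl fun m' _ => ?_
  exact Finset.sum_congr rfl fun j _ => sum_swap3 _ _ _ _
end StageB6

section StageB7
variable (φ : H ⊗[R] A →ₗ[R] A) (ω : H ⊗[R] H →ₗ[R] A)

lemma TTc (hco : partialCocycleLHS φ ω ∘ₗ (TensorProduct.assoc R H H H).toLinearMap =
      partialCocycleRHS ω) :
    ULm ω ∘ₗ TensorProduct.map (Wmap (R := R))
        (TensorProduct.map (Wmap (R := R)) (LinearMap.id : H ⊗[R] H →ₗ[R] H ⊗[R] H)) =
      URm φ ω ∘ₗ TensorProduct.map (Wmap (R := R))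
        (TensorProduct.map (Wmap (R := R)) (Wmap (R := R))) := by
  apply TensorProduct.ext'
  intro X Y
  induction X using TensorProduct.induction_on with
  | zero => simp
  | add x x' hx hx' => simp only [add_tmul, map_add, hx, hx']
  | tmul s t =>
    induction Y using TensorProduct.induction_on with
    | zero => simp
    | add y y' hy hy' => simp only [tmul_add, map_add, hy, hy']
    | tmul Y₁ Y₂ =>
      induction Y₁ using TensorProduct.induction_on with
      | zero => simp
      | add y y' hy hy' => simp only [add_tmul, tmul_add, map_add, hy, hy']
      | tmul u v =>
        induction Y₂ using TensorProduct.induction_on with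
        | zero => simp
        | add y y' hy hy' => simp only [tmul_add, map_add, hy, hy']
        | tmul p q =>
          set rs := ℛ R s
          set ru := ℛ R u
          set rp := ℛ R p
          have key := LinearMap.congr_fun hco ((s ⊗ₜ u) ⊗ₜ p)
          simp only [LinearMap.comp_apply, LinearEquiv.coe_coe, TensorProduct.assoc_tmul] at key
          rw [pCoL_tmul φ ω s u p rs ru rp, pCoR_tmul ω s u p rs ru] at key
          simp only [LinearMap.comp_apply, TensorProduct.map_tmul, LinearMap.id_coe, id_eq]
          rw [Wmap_tmul s t rs, Wmap_tmul u v ru, Wmap_tmul p q rp]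
          simp only [sum_tmul, tmul_sum, map_sum, ULm_tmul, URm_tmul]
          simp only [← sum_tmul]
          rw [mul_assoc]
          congr 1
          rw [Finset.sum_comm, ← key]
          exact Finset.sum_comm

lemma hcB (hco : partialCocycleLHS φ ω ∘ₗ (TensorProduct.assoc R H H H).toLinearMap =
      partialCocycleRHS ω) :
    cocycleLHS (sigmaOf ω) =
      cocycleRHS (psiOf φ) (sigmaOf ω) ∘ₗ (TensorProduct.assoc R H H H).toLinearMap := by
  apply TensorProduct.ext_threefold
  intro h g l
  have wx : ∀ x : H, Wmap (R := R) (Coalgebra.comul x) =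
      LinearMap.lTensor H Coalgebra.comul (Coalgebra.comul x) := fun x => by
    rw [Wmap]; exact Coalgebra.coassoc_apply x
  have key := LinearMap.congr_fun (TTc φ ω hco)
    ((Coalgebra.comul h) ⊗ₜ ((Coalgebra.comul g) ⊗ₜ (Coalgebra.comul l)))
  simp only [LinearMap.comp_apply, TensorProduct.map_tmul, LinearMap.id_coe, id_eq,
    wx] at key
  simp only [LinearMap.comp_apply, LinearEquiv.coe_coe, TensorProduct.assoc_tmul]
  rw [ELc ω h g l, ERc φ ω h g l, key]

end StageB7
/-- For a twisted partial action (φ, ω) satisfying the partial cocycle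
condition and the unit conditions, the partial crossed product
(a ⊗ h)(b ⊗ g) = Σ a φ(h₍₁₎ ⊗ b) ω(h₍₂₎ ⊗ g₍₁₎) ⊗ h₍₃₎g₍₂₎ is associative. -/
theorem partialCrossedProduct_assoc (φ : H ⊗[R] A →ₗ[R] A)
    (ω : H ⊗[R] H →ₗ[R] A)
    (h1 : ∀ a : A, φ ((1 : H) ⊗ₜ a) = a)
    (h2 : IsPartiallyMultiplicative φ)
    (h3 : partialTwistedLHS φ ω ∘ₗ (TensorProduct.assoc R H H A).toLinearMap =
      partialTwistedRHS φ ω)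
    (h4 : ω = partialTwistedRHS φ ω ∘ₗ (TensorProduct.mk R (H ⊗[R] H) A).flip 1)
    (hco : partialCocycleLHS φ ω ∘ₗ (TensorProduct.assoc R H H H).toLinearMap =
      partialCocycleRHS ω)
    (hunit : ∀ h : H, ω (h ⊗ₜ (1 : H)) = φ (h ⊗ₜ (1 : A)) ∧
      ω ((1 : H) ⊗ₜ h) = φ (h ⊗ₜ (1 : A))) :
    wcpMul (psiOf φ) (sigmaOf ω)
        ∘ₗ LinearMap.rTensor (A ⊗[R] H) (wcpMul (psiOf φ) (sigmaOf ω)) =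
      wcpMul (psiOf φ) (sigmaOf ω)
        ∘ₗ LinearMap.lTensor (A ⊗[R] H) (wcpMul (psiOf φ) (sigmaOf ω))
        ∘ₗ (TensorProduct.assoc R (A ⊗[R] H) (A ⊗[R] H) (A ⊗[R] H)).toLinearMap := by
  exact stageA (hmB φ h2) (htB φ ω h3) (hcB φ ω hco)
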